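/- Let H be an (ordered) graph on h vertices, and let 0 < 1/n ≪ γ ≪ α, β, 1/h, 1/s_1, 1/s_2. Let G be an n-vertex graph, x, y ∈ V(G), and A ⊆ V(G)\{x,y} with |A| ≥ αn. Suppose for every z ∈ A there are at least βn^{s_1 h - 1} sets X of size s_1 h - 1 with both G[X ∪ {x}] and G[X ∪ {z}] having perfect H-tilings, and at least βn^{s_2 h - 1} sets Y of size s_2 h - 1 with both G[Y ∪ {y}] and G[Y ∪ {z}] having perfect H-tilings. Then there are at least γn^{(s_1+s_2)h - 1} sets Z of size (s_1+s_2)h - 1 such that both G[Z ∪ {x}] and G[Z ∪ {y}] have perfect H-tilings. -/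

import Mathlib

open Finset

def IsCopy {h n : ℕ} (H : SimpleGraph (Fin h)) (G : SimpleGraph (Fin n))
    (f : Fin h → Fin n) : Prop :=
  StrictMono f ∧ ∀ i j, H.Adj i j → G.Adj (f i) (f j)

def TilesOn {h n : ℕ} (H : SimpleGraph (Fin h)) (G : SimpleGraph (Fin n))
    (X : Set (Fin n)) : Prop :=
  ∃ S : Set (Fin h → Fin n),
    (∀ f ∈ S, IsCopy H G f ∧ Set.range f ⊆ X) ∧
    (∀ v ∈ X, ∃! f, f ∈ S ∧ v ∈ Set.range f)

def HasPerfectTiling {h n : ℕ} (H : SimpleGraph (Fin h)) (G : SimpleGraph (Fin n)) : Prop :=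
  TilesOn H G Set.univ

/-- An interval `r`-colouring of an ordered graph `H` on `[h]`, encoded by its boundary
function `b`: the `k`-th class (for `k < r`) is the interval `[b k, b (k+1))`. -/
structure IColouring {h : ℕ} (H : SimpleGraph (Fin h)) (r : ℕ) where
  b : ℕ → ℕ
  mono : Monotone b
  first : b 0 = 0
  last : b r = h
  indep : ∀ k < r, ∀ i j : Fin h,
    b k ≤ (i : ℕ) → (i : ℕ) < b (k + 1) → b k ≤ (j : ℕ) → (j : ℕ) < b (k + 1) → ¬ H.Adj i j

/-- The interval chromatic number. -/
noncomputable def chiLt {h : ℕ} (H : SimpleGraph (Fin h)) : ℕ :=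
  sInf {r | Nonempty (IColouring H r)}

/-- `v` and `w` lie in the same class of the interval partition with boundaries `c`. -/
def SameClass (c : ℕ → ℕ) (v w : ℕ) : Prop := ∀ k, c k ≤ v ↔ c k ≤ w

/-- The ordered complete multipartite graph on `[n]` whose parts are the intervals with
boundary function `c`. -/
def OrdMultiB (n : ℕ) (c : ℕ → ℕ) : SimpleGraph (Fin n) :=
  SimpleGraph.fromRel (fun v w => ¬ SameClass c (v : ℕ) (w : ℕ))

/-- boundaries from part sizes -/
def bnd (q : ℕ → ℕ) (i : ℕ) : ℕ := ∑ j ∈ Finset.range i, q j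

noncomputable def deg {n : ℕ} (G : SimpleGraph (Fin n)) (v : Fin n) : ℕ :=
  {w | G.Adj v w}.ncard

noncomputable def minDeg {n : ℕ} (G : SimpleGraph (Fin n)) : ℕ :=
  sInf (Set.range (deg G))

/-- `B`, the complete `k`-partite graph with part sizes `p`, is a bottlegraph of `H`:
for every permutation `σ` of the parts (every interval labelling) there is a blow-up
factor `t` such that the ordered blow-up contains a perfect `H`-tiling. -/
def IsBottlegraph {h : ℕ} (H : SimpleGraph (Fin h)) (k : ℕ) (p : Fin k → ℕ) : Prop :=
  (∀ i, 0 < p i) ∧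
  ∀ σ : Equiv.Perm (Fin k), ∃ t : ℕ, 0 < t ∧
    HasPerfectTiling H
      (OrdMultiB (bnd (fun j => if hj : j < k then t * p (σ ⟨j, hj⟩) else 0) k)
        (bnd (fun j => if hj : j < k then t * p (σ ⟨j, hj⟩) else 0)))

noncomputable def minPart (k : ℕ) (p : Fin k → ℕ) : ℕ := sInf (Set.range fun i => p i)

/-- The critical chromatic number of a complete `k`-partite graph with part sizes `p`. -/
noncomputable def chiCrParts (k : ℕ) (p : Fin k → ℕ) : ℚ :=
  ((k : ℚ) - 1) * (∑ i, (p i : ℚ)) / ((∑ i, (p i : ℚ)) - (minPart k p : ℚ))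

/-- The ordered critical chromatic number. -/
noncomputable def chiCrStar {h : ℕ} (H : SimpleGraph (Fin h)) : ℝ :=
  sInf {x : ℝ | ∃ (k : ℕ) (p : Fin k → ℕ), IsBottlegraph H k p ∧ x = (chiCrParts k p : ℝ)}

/-- The family of "chains" of size `s` between `x` and `y`: sets `X` of size `s` such
that both `G[X ∪ {x}]` and `G[X ∪ {y}]` have perfect `H`-tilings. -/
def chainSets {h n : ℕ} (H : SimpleGraph (Fin h)) (G : SimpleGraph (Fin n))
    (x y : Fin n) (s : ℕ) : Set (Finset (Fin n)) :=
  {X | X.card = s ∧ x ∉ X ∧ y ∉ X ∧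
    TilesOn H G (↑(insert x X) : Set (Fin n)) ∧ TilesOn H G (↑(insert y X) : Set (Fin n))}

/-- Concatenation of chains: for all `α, β ∈ (0,1)` and `h, s₁, s₂ ≥ 1` there are
`γ > 0` and `n₀` such that for all `n ≥ n₀`: if `A ⊆ V(G) \ {x,y}` with `|A| ≥ αn` and
every `z ∈ A` has at least `βn^{s₁h-1}` chains of size `s₁h-1` to `x` and at least
`βn^{s₂h-1}` chains of size `s₂h-1` to `y`, then there are at least
`γn^{(s₁+s₂)h-1}` chains of size `(s₁+s₂)h-1` between `x` and `y`. -/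
lemma tilesOn_union {h n : ℕ} {H : SimpleGraph (Fin h)} {G : SimpleGraph (Fin n)}
    {S T : Set (Fin n)} (hd : Disjoint S T) (hS : TilesOn H G S) (hT : TilesOn H G T) :
    TilesOn H G (S ∪ T) := by
  obtain ⟨F₁, hF₁, hu₁⟩ := hS
  obtain ⟨F₂, hF₂, hu₂⟩ := hT
  refine ⟨F₁ ∪ F₂, ?_, ?_⟩
  · rintro f (hf | hf)
    · exact ⟨(hF₁ f hf).1, (hF₁ f hf).2.trans Set.subset_union_left⟩
    · exact ⟨(hF₂ f hf).1, (hF₂ f hf).2.trans Set.subset_union_right⟩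
  · rintro v (hv | hv)
    · obtain ⟨f, ⟨hfF, hvf⟩, huniq⟩ := hu₁ v hv
      refine ⟨f, ⟨Or.inl hfF, hvf⟩, ?_⟩
      rintro g ⟨(hg | hg), hvg⟩
      · exact huniq g ⟨hg, hvg⟩
      · exact absurd ((hF₂ g hg).2 hvg) (Set.disjoint_left.mp hd hv)
    · obtain ⟨f, ⟨hfF, hvf⟩, huniq⟩ := hu₂ v hv
      refine ⟨f, ⟨Or.inr hfF, hvf⟩, ?_⟩
      rintro g ⟨(hg | hg), hvg⟩
      · exact absurd ((hF₁ g hg).2 hvg) (Set.disjoint_right.mp hd hv)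
      · exact huniq g ⟨hg, hvg⟩

open Classical in
lemma countMem (n k : ℕ) (v : Fin n) :
    ((univ : Finset (Finset (Fin n))).filter fun X => X.card = k ∧ v ∈ X).card
      ≤ k * n ^ (k - 1) := by
  match k with
  | 0 =>
    rw [Finset.filter_false_of_mem, Finset.card_empty]
    · exact Nat.zero_le _
    · rintro X - ⟨hX, hv⟩
      rw [Finset.card_eq_zero] at hX
      simp [hX] at hv
  | k + 1 =>
    have : ((univ : Finset (Finset (Fin n))).filter fun X => X.card = k + 1 ∧ v ∈ X).card
        ≤ ((univ : Finset (Fin n)).powersetCard k).card := by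
      refine Finset.card_le_card_of_injOn (fun X => X.erase v) ?_ ?_
      · intro X hX
        simp only [Finset.mem_coe, Finset.mem_filter] at hX
        rw [Finset.mem_coe, Finset.mem_powersetCard]
        exact ⟨Finset.subset_univ _, by rw [Finset.card_erase_of_mem hX.2.2, hX.2.1]; rfl⟩
      · intro X hX X' hX' hE
        simp only [Finset.coe_filter, Set.mem_setOf_eq] at hX hX'
        have := congrArg (insert v) hE
        rwa [Finset.insert_erase hX.2.2, Finset.insert_erase hX'.2.2] at this
    calc _ ≤ _ := this
      _ = n.choose k := by rw [Finset.card_powersetCard, Finset.card_univ, Fintype.card_fin]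
      _ ≤ n ^ k := Nat.choose_le_pow n k
      _ ≤ (k + 1) * n ^ (k + 1 - 1) := by simp [Nat.le_mul_of_pos_left]

lemma pow_aux {β : ℝ} (hβ : 0 < β) (k K n : ℕ) (hn : (2 * K * k : ℝ) ≤ β * n) :
    ((K : ℝ) * (k : ℝ)) * (n : ℝ) ^ (k - 1) ≤ β / 2 * (n : ℝ) ^ k := by
  match k with
  | 0 => simp; positivity
  | m + 1 =>
    push_cast
    have h1 : ((n : ℝ)) ^ (m + 1) = (n : ℝ) ^ m * n := pow_succ _ _
    have h2 : (0:ℝ) ≤ (n : ℝ) ^ m := by positivity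
    have : (K:ℝ) * ((m:ℝ)+1) ≤ β / 2 * n := by
      push_cast at hn ⊢; linarith
    have hE : (m + 1 - 1 : ℕ) = m := rfl
    calc ((K : ℝ) * ((m:ℝ)+1)) * (n:ℝ) ^ (m + 1 - 1 : ℕ) = (n:ℝ)^m * ((K:ℝ) * ((m:ℝ)+1)) := by
          rw [hE]; ring
      _ ≤ (n:ℝ)^m * (β/2 * n) := mul_le_mul_of_nonneg_left this h2
      _ = β/2 * (n:ℝ)^(m+1) := by rw [h1]; ring

lemma sdiff_reconstruct {n : ℕ} {z : Fin n} {X Y : Finset (Fin n)} (hzY : z ∉ Y)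
    (hd : Disjoint X Y) : (insert z (X ∪ Y)) \ (insert z X) = Y := by
  ext w
  simp only [Finset.mem_sdiff, Finset.mem_insert, Finset.mem_union]
  constructor
  · rintro ⟨(rfl | hw | hw), hne⟩ <;> tauto
  · intro hw
    have hX := Finset.disjoint_right.mp hd hw
    refine ⟨Or.inr (Or.inr hw), ?_⟩
    rintro (rfl | h)
    · exact hzY hw
    · exact hX h

set_option maxHeartbeats 2000000 in
open Classical in
lemma chain_concat {h n : ℕ} (H : SimpleGraph (Fin h)) (G : SimpleGraph (Fin n))
    (x y : Fin n) (A : Set (Fin n)) (a b c : ℕ) (hcab : c = a + b + 1)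
    {α β : ℝ} (hα0 : 0 < α) (hβ0 : 0 < β)
    (hn2 : 2 * ((a:ℝ) + 2) * ((b:ℝ) + 2) ≤ β * n)
    (hxA : x ∉ A) (hyA : y ∉ A) (hA : α * n ≤ (A.ncard : ℝ))
    (hch : ∀ z ∈ A,
      β * (n:ℝ) ^ a ≤ ((chainSets H G x z a).ncard : ℝ) ∧
      β * (n:ℝ) ^ b ≤ ((chainSets H G y z b).ncard : ℝ)) :
    α * β ^ 2 / (4 * ((c * 2 ^ c : ℕ) : ℝ)) * (n:ℝ) ^ c ≤
      ((chainSets H G x y c).ncard : ℝ) := by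
  set XS : Fin n → Finset (Finset (Fin n)) :=
    fun z => ((chainSets H G x z a).toFinite.toFinset).filter (fun X => y ∉ X) with hXSdef
  set YS : Fin n → Finset (Fin n) → Finset (Finset (Fin n)) :=
    fun z X => ((chainSets H G y z b).toFinite.toFinset).filter
      (fun Y => x ∉ Y ∧ Disjoint X Y) with hYSdef
  -- Claim A
  have hXS : ∀ z ∈ A, β / 2 * (n:ℝ) ^ a ≤ ((XS z).card : ℝ) := by
    intro z hz
    have hfull : (XS z).card
        + (((chainSets H G x z a).toFinite.toFinset).filter (fun X => ¬ y ∉ X)).card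
        = ((chainSets H G x z a).toFinite.toFinset).card :=
      Finset.card_filter_add_card_filter_not _
    have hbad : (((chainSets H G x z a).toFinite.toFinset).filter (fun X => ¬ y ∉ X)).card
        ≤ a * n ^ (a - 1) := by
      refine le_trans (Finset.card_le_card ?_) (countMem n a y)
      intro X hX
      simp only [Finset.mem_filter, Set.Finite.mem_toFinset] at hX
      have hX1 : X.card = a := hX.1.1
      simp only [Finset.mem_filter, Finset.mem_univ, true_and]
      exact ⟨hX1, not_not.mp hX.2⟩
    have h1 := (hch z hz).1
    rw [Set.ncard_eq_toFinset_card _ (Set.toFinite _)] at h1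
    have hpa := pow_aux hβ0 a 1 n (by push_cast; nlinarith)
    have hc1 : (((XS z).card : ℝ))
        + ((((chainSets H G x z a).toFinite.toFinset).filter (fun X => ¬ y ∉ X)).card : ℝ)
        = (((chainSets H G x z a).toFinite.toFinset).card : ℝ) := by exact_mod_cast hfull
    have hc2 : ((((chainSets H G x z a).toFinite.toFinset).filter (fun X => ¬ y ∉ X)).card : ℝ)
        ≤ (a : ℝ) * (n:ℝ) ^ (a - 1) := by exact_mod_cast hbad
    nlinarith [hpa, hc1, hc2, h1]
  -- Claim B
  have hYS : ∀ z ∈ A, ∀ X ∈ XS z, β / 2 * (n:ℝ) ^ b ≤ ((YS z X).card : ℝ) := by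
    intro z hz X hX
    have hXa : X.card = a := by
      simp only [hXSdef, Finset.mem_filter, Set.Finite.mem_toFinset] at hX
      exact hX.1.1
    have hfull : (YS z X).card
        + (((chainSets H G y z b).toFinite.toFinset).filter
            (fun Y => ¬ (x ∉ Y ∧ Disjoint X Y))).card
        = ((chainSets H G y z b).toFinite.toFinset).card :=
      Finset.card_filter_add_card_filter_not _
    have hbad : (((chainSets H G y z b).toFinite.toFinset).filter
          (fun Y => ¬ (x ∉ Y ∧ Disjoint X Y))).card ≤ (a + 1) * (b * n ^ (b - 1)) := by
      have hsub : ((chainSets H G y z b).toFinite.toFinset).filter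
            (fun Y => ¬ (x ∉ Y ∧ Disjoint X Y))
          ⊆ (insert x X).biUnion
            (fun v => (univ : Finset (Finset (Fin n))).filter fun Y => Y.card = b ∧ v ∈ Y) := by
        intro Y hY
        simp only [Finset.mem_filter, Set.Finite.mem_toFinset] at hY
        have hYb : Y.card = b := hY.1.1
        rw [Finset.mem_biUnion]
        rcases not_and_or.mp hY.2 with hxY | hnd
        · exact ⟨x, Finset.mem_insert_self _ _,
            by simp only [Finset.mem_filter, Finset.mem_univ, true_and];
               exact ⟨hYb, not_not.mp hxY⟩⟩
        · obtain ⟨v, hvX, hvY⟩ := Finset.not_disjoint_iff.mp hnd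
          exact ⟨v, Finset.mem_insert_of_mem hvX,
            by simp only [Finset.mem_filter, Finset.mem_univ, true_and]; exact ⟨hYb, hvY⟩⟩
      calc _ ≤ _ := Finset.card_le_card hsub
        _ ≤ ∑ v ∈ insert x X, ((univ : Finset (Finset (Fin n))).filter
              fun Y => Y.card = b ∧ v ∈ Y).card := Finset.card_biUnion_le
        _ ≤ (insert x X).card * (b * n ^ (b - 1)) := by
            rw [← smul_eq_mul]
            exact Finset.sum_le_card_nsmul _ _ _ (fun v _ => countMem n b v)
        _ ≤ (a + 1) * (b * n ^ (b - 1)) := by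
            have := Finset.card_insert_le x X
            exact Nat.mul_le_mul_right _ (by omega)
    have h1 := (hch z hz).2
    rw [Set.ncard_eq_toFinset_card _ (Set.toFinite _)] at h1
    have hpa := pow_aux hβ0 b (a + 1) n (by push_cast; nlinarith)
    have hc1 : (((YS z X).card : ℝ))
        + ((((chainSets H G y z b).toFinite.toFinset).filter
            (fun Y => ¬ (x ∉ Y ∧ Disjoint X Y))).card : ℝ)
        = (((chainSets H G y z b).toFinite.toFinset).card : ℝ) := by
      exact_mod_cast hfull
    have hc2 : ((((chainSets H G y z b).toFinite.toFinset).filter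
          (fun Y => ¬ (x ∉ Y ∧ Disjoint X Y))).card : ℝ)
        ≤ ((a:ℝ) + 1) * ((b:ℝ) * (n:ℝ) ^ (b - 1)) := by
      have : (((a + 1) * (b * n ^ (b - 1)) : ℕ) : ℝ)
          = ((a:ℝ) + 1) * ((b:ℝ) * (n:ℝ) ^ (b - 1)) := by push_cast; ring
      rw [← this]; exact_mod_cast hbad
    have hc3 : ((a:ℝ) + 1) * ((b:ℝ) * (n:ℝ) ^ (b - 1))
        = ((a:ℝ) + 1) * (b:ℝ) * (n:ℝ) ^ (b - 1) := by ring
    push_cast at hpa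
    nlinarith [hpa, hc1, hc2, h1]
  -- the triple set
  set T : Finset ((_ : Fin n) × (_ : Finset (Fin n)) × Finset (Fin n)) :=
    (A.toFinite.toFinset).sigma (fun z => (XS z).sigma (fun X => YS z X)) with hTdef
  have hTmem : ∀ t ∈ T, t.1 ∈ A ∧ t.2.1 ∈ chainSets H G x t.1 a ∧ y ∉ t.2.1 ∧
      t.2.2 ∈ chainSets H G y t.1 b ∧ x ∉ t.2.2 ∧ Disjoint t.2.1 t.2.2 := by
    intro t ht
    simp only [hTdef, hXSdef, hYSdef, Finset.mem_sigma, Finset.mem_filter,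
      Set.Finite.mem_toFinset] at ht
    tauto
  -- lower bound on T.card
  have hT1 : α * n * (β / 2 * (n:ℝ) ^ a * (β / 2 * (n:ℝ) ^ b)) ≤ (T.card : ℝ) := by
    have hcc : (T.card : ℝ) = ∑ z ∈ A.toFinite.toFinset, ∑ X ∈ XS z, ((YS z X).card : ℝ) := by
      rw [hTdef, Finset.card_sigma]
      push_cast [Finset.card_sigma]
      rfl
    have hnn : (0:ℝ) ≤ β / 2 * (n:ℝ) ^ b := by positivity
    have hinner : ∀ z ∈ A.toFinite.toFinset,
        β / 2 * (n:ℝ) ^ a * (β / 2 * (n:ℝ) ^ b) ≤ ∑ X ∈ XS z, ((YS z X).card : ℝ) := by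
      intro z hz
      rw [Set.Finite.mem_toFinset] at hz
      have h1 := Finset.card_nsmul_le_sum (XS z) (fun X => ((YS z X).card : ℝ))
        (β / 2 * (n:ℝ) ^ b) (fun X hX => hYS z hz X hX)
      rw [nsmul_eq_mul] at h1
      calc β / 2 * (n:ℝ) ^ a * (β / 2 * (n:ℝ) ^ b)
          ≤ ((XS z).card : ℝ) * (β / 2 * (n:ℝ) ^ b) :=
            mul_le_mul_of_nonneg_right (hXS z hz) hnn
        _ ≤ _ := h1
    have h2 := Finset.card_nsmul_le_sum (A.toFinite.toFinset)
      (fun z => ∑ X ∈ XS z, ((YS z X).card : ℝ))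
      (β / 2 * (n:ℝ) ^ a * (β / 2 * (n:ℝ) ^ b)) hinner
    rw [nsmul_eq_mul] at h2
    have hAc : ((A.toFinite.toFinset).card : ℝ) = (A.ncard : ℝ) := by
      rw [Set.ncard_eq_toFinset_card _ (Set.toFinite _)]
    have hnn2 : (0:ℝ) ≤ β / 2 * (n:ℝ) ^ a * (β / 2 * (n:ℝ) ^ b) := by positivity
    rw [hcc]
    calc α * n * (β / 2 * (n:ℝ) ^ a * (β / 2 * (n:ℝ) ^ b))
        ≤ ((A.toFinite.toFinset).card : ℝ) * (β / 2 * (n:ℝ) ^ a * (β / 2 * (n:ℝ) ^ b)) := by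
          rw [hAc]; exact mul_le_mul_of_nonneg_right hA hnn2
      _ ≤ _ := h2
  -- the gluing map
  set φ : ((_ : Fin n) × (_ : Finset (Fin n)) × Finset (Fin n)) → Finset (Fin n) :=
    fun t => insert t.1 (t.2.1 ∪ t.2.2) with hφdef
  -- image lands in the chain sets
  have himg : ∀ t ∈ T, φ t ∈ chainSets H G x y c := by
    intro t ht
    obtain ⟨hzA, hXc, hyX, hYc, hxY, hdXY⟩ := hTmem t ht
    obtain ⟨hXa, hxX, hzX, htx1, htx2⟩ := hXc
    obtain ⟨hYb, hyY, hzY, hty1, hty2⟩ := hYc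
    have hxz : x ≠ t.1 := fun he => hxA (he ▸ hzA)
    have hyz : y ≠ t.1 := fun he => hyA (he ▸ hzA)
    have hzXY : t.1 ∉ t.2.1 ∪ t.2.2 := by
      simp only [Finset.mem_union]; tauto
    have hcardZ : (φ t).card = c := by
      rw [hφdef]
      simp only
      rw [Finset.card_insert_of_notMem hzXY, Finset.card_union_of_disjoint hdXY, hXa, hYb, hcab]
    have hxZ : x ∉ φ t := by
      simp only [hφdef, Finset.mem_insert, Finset.mem_union]
      push_neg
      exact ⟨hxz, hxX, hxY⟩
    have hyZ : y ∉ φ t := by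
      simp only [hφdef, Finset.mem_insert, Finset.mem_union]
      push_neg
      exact ⟨hyz, hyX, hyY⟩
    have hsplit1 : insert x (φ t) = insert x t.2.1 ∪ insert t.1 t.2.2 := by
      ext w
      simp only [hφdef, Finset.mem_insert, Finset.mem_union]
      tauto
    have hsplit2 : insert y (φ t) = insert y t.2.2 ∪ insert t.1 t.2.1 := by
      ext w
      simp only [hφdef, Finset.mem_insert, Finset.mem_union]
      tauto
    have hd1 : Disjoint (↑(insert x t.2.1) : Set (Fin n)) ↑(insert t.1 t.2.2) := by
      rw [Finset.disjoint_coe, Finset.disjoint_left]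
      intro w hw hw'
      simp only [Finset.mem_insert] at hw hw'
      rcases hw with rfl | hw
      · rcases hw' with h' | h' <;> [exact hxz h'; exact hxY h']
      · rcases hw' with rfl | h'
        · exact hzX hw
        · exact Finset.disjoint_left.mp hdXY hw h'
    have hd2 : Disjoint (↑(insert y t.2.2) : Set (Fin n)) ↑(insert t.1 t.2.1) := by
      rw [Finset.disjoint_coe, Finset.disjoint_left]
      intro w hw hw'
      simp only [Finset.mem_insert] at hw hw'
      rcases hw with rfl | hw
      · rcases hw' with h' | h' <;> [exact hyz h'; exact hyX h']
      · rcases hw' with rfl | h'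
        · exact hzY hw
        · exact Finset.disjoint_left.mp hdXY h' hw
    refine ⟨hcardZ, hxZ, hyZ, ?_, ?_⟩
    · rw [hsplit1, Finset.coe_union]
      exact tilesOn_union hd1 htx1 hty2
    · rw [hsplit2, Finset.coe_union]
      exact tilesOn_union hd2 hty1 htx2
  -- fiber bound
  have hfiber : ∀ Z ∈ T.image φ, (T.filter (fun t => φ t = Z)).card ≤ c * 2 ^ c := by
    intro Z hZ
    obtain ⟨t₀, ht₀, hφt₀⟩ := Finset.mem_image.mp hZ
    have hZc : Z.card = c := by rw [← hφt₀]; exact (himg t₀ ht₀).1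
    have hinj : (T.filter (fun t => φ t = Z)).card ≤ (Z ×ˢ Z.powerset).card := by
      refine Finset.card_le_card_of_injOn (fun t => (t.1, t.2.1)) ?_ ?_
      · intro t ht
        rw [Finset.mem_coe, Finset.mem_filter] at ht
        rw [Finset.mem_coe, Finset.mem_product, Finset.mem_powerset]
        constructor
        · rw [← ht.2]; exact Finset.mem_insert_self _ _
        · rw [← ht.2]
          exact Finset.subset_union_left.trans (Finset.subset_insert _ _)
      · rintro ⟨z, X, Y⟩ ht ⟨z', X', Y'⟩ ht' hE
        simp only [Finset.coe_filter, Set.mem_setOf_eq] at ht ht'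
        simp only [Prod.mk.injEq] at hE
        obtain ⟨rfl, rfl⟩ := hE
        obtain ⟨-, -, -, hY, -, hd⟩ := hTmem _ ht.1
        obtain ⟨-, -, -, hY', -, hd'⟩ := hTmem _ ht'.1
        have hzY : z ∉ Y := hY.2.2.1
        have hzY' : z ∉ Y' := hY'.2.2.1
        have hφφ : φ ⟨z, X, Y⟩ = φ ⟨z, X, Y'⟩ := by rw [ht.2, ht'.2]
        simp only [hφdef] at hφφ
        have : Y = Y' := by
          rw [← sdiff_reconstruct hzY hd, ← sdiff_reconstruct hzY' hd', hφφ]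
        rw [this]
    calc _ ≤ _ := hinj
      _ = c * 2 ^ c := by
          rw [Finset.card_product, Finset.card_powerset, hZc]
  have hT2 : T.card ≤ (c * 2 ^ c) * (T.image φ).card :=
    Finset.card_le_mul_card_image T _ hfiber
  have himgcard : (T.image φ).card ≤ (chainSets H G x y c).ncard := by
    rw [Set.ncard_eq_toFinset_card _ (Set.toFinite _)]
    refine Finset.card_le_card ?_
    intro Z hZ
    obtain ⟨t, ht, rfl⟩ := Finset.mem_image.mp hZ
    rw [Set.Finite.mem_toFinset]
    exact himg t ht
  -- conclusion
  have hKpos : (0:ℝ) < ((c * 2 ^ c : ℕ) : ℝ) := by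
    have : 0 < c := by omega
    positivity
  have hKR : (T.card : ℝ) ≤ ((c * 2 ^ c : ℕ) : ℝ) * ((chainSets H G x y c).ncard : ℝ) := by
    calc (T.card : ℝ) ≤ (((c * 2 ^ c) * (T.image φ).card : ℕ) : ℝ) := by exact_mod_cast hT2
      _ = ((c * 2 ^ c : ℕ) : ℝ) * ((T.image φ).card : ℝ) := by push_cast; ring
      _ ≤ _ := by
          refine mul_le_mul_of_nonneg_left ?_ (le_of_lt hKpos)
          exact_mod_cast himgcard
  have hpow : (n:ℝ) ^ c = (n:ℝ) * ((n:ℝ) ^ a * (n:ℝ) ^ b) := by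
    rw [hcab, pow_succ, pow_add]; ring
  have hmain : α * β ^ 2 / 4 * (n:ℝ) ^ c
      ≤ ((c * 2 ^ c : ℕ) : ℝ) * ((chainSets H G x y c).ncard : ℝ) := by
    calc α * β ^ 2 / 4 * (n:ℝ) ^ c
        = α * n * (β / 2 * (n:ℝ) ^ a * (β / 2 * (n:ℝ) ^ b)) := by rw [hpow]; ring
      _ ≤ (T.card : ℝ) := hT1
      _ ≤ _ := hKR
  rw [div_mul_eq_mul_div, div_le_iff₀ (by positivity)]
  calc α * β ^ 2 * (n:ℝ) ^ c = 4 * (α * β ^ 2 / 4 * (n:ℝ) ^ c) := by ring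
    _ ≤ 4 * (((c * 2 ^ c : ℕ) : ℝ) * ((chainSets H G x y c).ncard : ℝ)) := by linarith
    _ = ((chainSets H G x y c).ncard : ℝ) * (4 * ((c * 2 ^ c : ℕ) : ℝ)) := by ring

theorem stmt14 (α β : ℝ) (hα0 : 0 < α) (hα1 : α < 1) (hβ0 : 0 < β) (hβ1 : β < 1)
    (h s₁ s₂ : ℕ) (hh : 0 < h) (hs₁ : 0 < s₁) (hs₂ : 0 < s₂) :
    ∃ γ : ℝ, 0 < γ ∧ ∃ n₀ : ℕ, ∀ n, n₀ ≤ n →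
      ∀ (H : SimpleGraph (Fin h)) (G : SimpleGraph (Fin n)) (x y : Fin n)
        (A : Set (Fin n)), x ∉ A → y ∉ A → α * n ≤ (A.ncard : ℝ) →
        (∀ z ∈ A,
          β * (n : ℝ) ^ (s₁ * h - 1) ≤ ((chainSets H G x z (s₁ * h - 1)).ncard : ℝ) ∧
          β * (n : ℝ) ^ (s₂ * h - 1) ≤ ((chainSets H G y z (s₂ * h - 1)).ncard : ℝ)) →
        γ * (n : ℝ) ^ ((s₁ + s₂) * h - 1) ≤
          ((chainSets H G x y ((s₁ + s₂) * h - 1)).ncard : ℝ) := by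
  have h1 : 0 < s₁ * h := Nat.mul_pos hs₁ hh
  have h2 : 0 < s₂ * h := Nat.mul_pos hs₂ hh
  set a := s₁ * h - 1 with ha
  set b := s₂ * h - 1 with hb
  set c := (s₁ + s₂) * h - 1 with hc
  have hcab : c = a + b + 1 := by
    have hm : (s₁ + s₂) * h = s₁ * h + s₂ * h := add_mul _ _ _
    omega
  have hcpos : 0 < c := by omega
  refine ⟨α * β ^ 2 / (4 * ((c * 2 ^ c : ℕ) : ℝ)), ?_, ⟨⌈(2 * ((a:ℝ) + 2) * ((b:ℝ) + 2)) / β⌉₊, ?_⟩⟩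
  · apply div_pos (by positivity)
    have : (0:ℝ) < ((c * 2 ^ c : ℕ) : ℝ) := by positivity
    linarith
  · intro n hn H G x y A hxA hyA hA hch
    refine chain_concat H G x y A a b c hcab hα0 hβ0 ?_ hxA hyA hA hch
    have hle : (2 * ((a:ℝ) + 2) * ((b:ℝ) + 2)) / β ≤ (n : ℝ) := by
      calc (2 * ((a:ℝ) + 2) * ((b:ℝ) + 2)) / β
          ≤ (⌈(2 * ((a:ℝ) + 2) * ((b:ℝ) + 2)) / β⌉₊ : ℝ) := Nat.le_ceil _
        _ ≤ (n : ℝ) := by exact_mod_cast hn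
    rw [div_le_iff₀ hβ0] at hle
    linarith
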